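/- The Q&A estimator is unbiased: for every group g ∈ {1,…,k}, E[Ŝ_QA(g)] = E[S(g)], where S(g) = Σ_{i : G_i = g} V_i is the true aggregate and Ŝ_QA(g) = ((2m−1)/(2m − 2mλ − 1))·Σ_{i=1}^n Q_i(g, A_i). (Theorem 1, part 3, unbiasedness.) -/

import Mathlib

open scoped BigOperators

noncomputable section

/-- The value alphabet `V = {±1, …, ±m} ⊆ ℤ`. -/
def Vset (m : ℕ) : Finset ℤ := (Finset.Icc (-(m : ℤ)) m).erase 0

/-- Values as a (finite) type. -/
abbrev Vt (m : ℕ) : Type := {v : ℤ // v ∈ Vset m}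

/-- Query matrices: `k × 2m` matrices whose rows are permutations of `V`,
encoded row-wise as equivalences between column indices and values. -/
abbrev Query (k m : ℕ) : Type := Fin k → (Fin (2*m) ≃ Vt m)

/-- The randomized response channel `RR_λ` on `V`: probability that input `v`
is turned into output `w`. -/
def RR (m : ℕ) (lam : ℝ) (v w : Vt m) : ℝ :=
  if w = v then 1 - lam else lam / (2*m - 1)
/-- One Q&A user's outcome: his group, value, query matrix, and randomized value. -/
abbrev OmegaQA (k m : ℕ) : Type := Fin k × Vt m × Query k m × Vt m

/-- Probability weight of a single Q&A user's outcome `(g, v, q, v̊)`: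
`θ(g)·p_g(v)·(1/|𝒬|)·RR_λ(v, v̊)` (`G ~ θ`; given `G = g`, `V ~ p_g`; `Q`
uniform on `𝒬` independent of `(G,V)`; `V̊ = RR_λ(V)`). -/
def wQA (k m : ℕ) (θ : Fin k → ℝ) (p : Fin k → Vt m → ℝ) (lam : ℝ)
    (ω : OmegaQA k m) : ℝ :=
  θ ω.1 * p ω.1 ω.2.1 * (1 / (Fintype.card (Query k m) : ℝ)) *
    RR m lam ω.2.1 ω.2.2.2

/-- The entry `Q(j, A)` in row `j` of the decoded query column: the user's
answer is `A = a(Q, G, V̊)`, the column of row `G` of `Q` containing `V̊`. -/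
def decodeQA (k m : ℕ) (ω : OmegaQA k m) (j : Fin k) : ℤ :=
  ((ω.2.2.1 j) ((ω.2.2.1 ω.1).symm ω.2.2.2) : ℤ)

/-- True aggregate of group `g`: `S(g) = Σ_{i : G_i = g} V_i`. -/
def trueAgg (k m n : ℕ) (ω : Fin n → OmegaQA k m) (g : Fin k) : ℝ :=
  ∑ i, if (ω i).1 = g then (((ω i).2.1 : ℤ) : ℝ) else 0

/-- The Q&A estimator `Ŝ_QA(g) = ((2m−1)/(2m−2mλ−1))·Σ_i Q_i(g, A_i)`. -/
def estQA (k m n : ℕ) (lam : ℝ) (ω : Fin n → OmegaQA k m) (g : Fin k) : ℝ :=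
  ((2*m - 1) / (2*m - 2*m*lam - 1)) * ∑ i, ((decodeQA k m (ω i) g : ℤ) : ℝ)
set_option maxHeartbeats 1000000
section Aux

lemma Vset_neg_mem {m : ℕ} {v : ℤ} (hv : v ∈ Vset m) : -v ∈ Vset m := by
  simp only [Vset, Finset.mem_erase, Finset.mem_Icc] at hv ⊢
  omega

def negE (m : ℕ) : Vt m ≃ Vt m where
  toFun v := ⟨-v.1, Vset_neg_mem v.2⟩
  invFun v := ⟨-v.1, Vset_neg_mem v.2⟩
  left_inv v := by simp
  right_inv v := by simp

lemma sumV (m : ℕ) : ∑ v : Vt m, ((v : ℤ) : ℝ) = 0 := by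
  have h : ∑ v : Vt m, ((v : ℤ) : ℝ) = ∑ v : Vt m, (((negE m v : ℤ)) : ℝ) :=
    Fintype.sum_equiv (negE m) (fun v => (((negE m v : ℤ)) : ℝ)) _ (fun v => rfl) |>.symm
  have h2 : ∑ v : Vt m, ((v : ℤ) : ℝ) = -∑ v : Vt m, ((v : ℤ) : ℝ) := by
    nth_rewrite 1 [h]
    simp [negE]
  linarith

lemma cardVt (m : ℕ) (hm : 0 < m) : Fintype.card (Vt m) = 2*m := by
  rw [Fintype.card_coe]
  rw [Vset, Finset.card_erase_of_mem (by simp), Int.card_Icc]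
  omega

lemma nonemptyEquiv (m : ℕ) (hm : 0 < m) : Nonempty (Fin (2*m) ≃ Vt m) := by
  rw [← Fintype.card_eq]
  simp [cardVt m hm]

lemma negE_coe (m : ℕ) (v : Vt m) : ((negE m v : ℤ) : ℝ) = -((v : ℤ) : ℝ) := by
  simp [negE]

lemma negE_negE (m : ℕ) (v : Vt m) : negE m (negE m v) = v := by
  simp [negE]
lemma twom_ne (m : ℕ) (hm : 0 < m) : (2*(m:ℝ) - 1) ≠ 0 := by
  have : (1:ℝ) ≤ (m:ℝ) := by exact_mod_cast hm
  linarith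

lemma RR_sum (m : ℕ) (hm : 0 < m) (lam : ℝ) (v : Vt m) :
    ∑ w : Vt m, RR m lam v w = 1 := by
  have h2 := twom_ne m hm
  rw [← Finset.add_sum_erase Finset.univ _ (Finset.mem_univ v)]
  rw [Finset.sum_congr rfl (fun w hw => show RR m lam v w = lam / (2*m-1) by
    simp only [RR, if_neg (Finset.ne_of_mem_erase hw)])]
  rw [Finset.sum_const, Finset.card_erase_of_mem (Finset.mem_univ v),
    Finset.card_univ, cardVt m hm]
  simp only [RR, if_pos rfl, nsmul_eq_mul]
  push_cast
  field_simp
  rw [Nat.cast_sub (by omega)]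
  push_cast
  ring

lemma RR_sum_val (m : ℕ) (hm : 0 < m) (lam : ℝ) (v : Vt m) :
    ∑ w : Vt m, RR m lam v w * ((w : ℤ) : ℝ)
      = ((2*m - 2*m*lam - 1)/(2*m - 1)) * ((v : ℤ) : ℝ) := by
  have h2 := twom_ne m hm
  rw [← Finset.add_sum_erase Finset.univ _ (Finset.mem_univ v)]
  rw [Finset.sum_congr rfl (fun w hw => show RR m lam v w * ((w : ℤ) : ℝ)
      = lam / (2*m-1) * ((w : ℤ) : ℝ) by
    simp only [RR, if_neg (Finset.ne_of_mem_erase hw)])]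
  rw [← Finset.mul_sum]
  have herase : ∑ w ∈ Finset.univ.erase v, ((w : ℤ) : ℝ) = -((v : ℤ) : ℝ) := by
    have := Finset.add_sum_erase Finset.univ (fun w : Vt m => ((w : ℤ) : ℝ)) (Finset.mem_univ v)
    have hs := sumV m
    linarith [this]
  rw [herase]
  simp only [RR, if_pos rfl, if_true, ↓reduceIte]
  field_simp
  ring

lemma sum_query_eq (m k : ℕ) (hm : 0 < m) (g : Fin k) (w : Vt m) :
    ∑ q : Query k m, (((q g) ((q g).symm w) : ℤ) : ℝ)
      = (Fintype.card (Query k m) : ℝ) * ((w : ℤ) : ℝ) := by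
  simp

lemma sum_query_ne (m k : ℕ) (g g' : Fin k) (hgg : g' ≠ g) (w : Vt m) :
    ∑ q : Query k m, (((q g) ((q g').symm w) : ℤ) : ℝ) = 0 := by
  classical
  set φ : Query k m → Query k m :=
    fun q => Function.update q g ((q g).trans (negE m)) with hφdef
  have hφ : Function.Involutive φ := by
    intro q
    funext j
    by_cases hj : j = g
    · subst hj
      simp only [hφdef, Function.update_self]
      ext x
      simp [negE_negE]
    · simp [hφdef, Function.update_of_ne hj]
  have hflip : ∀ q : Query k m,
      ((((φ q) g) (((φ q) g').symm w) : ℤ) : ℝ)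
        = -(((q g) ((q g').symm w) : ℤ) : ℝ) := by
    intro q
    have h1 : (φ q) g' = q g' := Function.update_of_ne hgg _ _
    have h2 : (φ q) g = (q g).trans (negE m) := Function.update_self _ _ _
    rw [h1, h2]
    exact negE_coe m _
  have hsum : ∑ q : Query k m, (((q g) ((q g').symm w) : ℤ) : ℝ)
      = ∑ q : Query k m, ((((φ q) g) (((φ q) g').symm w) : ℤ) : ℝ) :=
    Fintype.sum_equiv hφ.toPerm _ _ (fun q => rfl) |>.symm
  have : ∑ q : Query k m, (((q g) ((q g').symm w) : ℤ) : ℝ)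
      = -∑ q : Query k m, (((q g) ((q g').symm w) : ℤ) : ℝ) := by
    nth_rewrite 1 [hsum]
    simp only [hflip]
    rw [Finset.sum_neg_distrib]
  linarith
lemma cardQ_ne (m k : ℕ) (hm : 0 < m) :
    (Fintype.card (Query k m) : ℝ) ≠ 0 := by
  have : Nonempty (Query k m) := ⟨fun _ => (nonemptyEquiv m hm).some⟩
  exact_mod_cast Fintype.card_ne_zero

lemma single_decode (m k : ℕ) (hm : 0 < m) (θ : Fin k → ℝ)
    (p : Fin k → Vt m → ℝ) (lam : ℝ) (g : Fin k) :
    ∑ ω : OmegaQA k m, wQA k m θ p lam ω * ((decodeQA k m ω g : ℤ) : ℝ)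
      = ((2*m - 2*m*lam - 1)/(2*m - 1))
          * (θ g * ∑ v : Vt m, p g v * ((v : ℤ) : ℝ)) := by
  classical
  have hN := cardQ_ne m k hm
  simp only [Fintype.sum_prod_type, wQA, decodeQA]
  set N : ℝ := (Fintype.card (Query k m) : ℝ) with hNdef
  have key : ∀ g' : Fin k, ∀ v : Vt m,
      (∑ q : Query k m, ∑ w : Vt m,
        θ g' * p g' v * (1 / N) * RR m lam v w *
          (((q g) ((q g').symm w) : ℤ) : ℝ))
      = if g' = g then
          θ g * p g v * (((2*m - 2*m*lam - 1)/(2*m - 1)) * ((v : ℤ) : ℝ))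
        else 0 := by
    intro g' v
    rw [Finset.sum_comm]
    by_cases hg : g' = g
    · subst hg
      rw [if_pos rfl]
      have hstep : ∀ w : Vt m,
          (∑ q : Query k m,
            θ g' * p g' v * (1 / N) * RR m lam v w *
              (((q g') ((q g').symm w) : ℤ) : ℝ))
          = θ g' * p g' v * (RR m lam v w * ((w : ℤ) : ℝ)) := by
        intro w
        rw [← Finset.mul_sum, sum_query_eq m k hm g' w, ← hNdef]
        have h1 : (1 / N) * N = 1 := one_div_mul_cancel hN
        calc θ g' * p g' v * (1 / N) * RR m lam v w * (N * ((w : ℤ) : ℝ))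
            = θ g' * p g' v * (RR m lam v w * ((w : ℤ) : ℝ)) * ((1 / N) * N) := by
              ring
          _ = θ g' * p g' v * (RR m lam v w * ((w : ℤ) : ℝ)) := by
              rw [h1, mul_one]
      rw [Finset.sum_congr rfl (fun w _ => hstep w), ← Finset.mul_sum,
        RR_sum_val m hm lam v]
    · rw [if_neg hg]
      refine Finset.sum_eq_zero (fun w _ => ?_)
      rw [← Finset.mul_sum, sum_query_ne m k g g' hg w, mul_zero]
  rw [Finset.sum_congr rfl (fun g' _ => Finset.sum_congr rfl (fun v _ => key g' v))]
  rw [Finset.sum_comm]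
  rw [Finset.sum_congr rfl (fun v (_ : v ∈ Finset.univ) =>
    Finset.sum_ite_eq' Finset.univ g
      (fun _ => θ g * p g v * (((2*m - 2*m*lam - 1)/(2*m - 1)) * ((v : ℤ) : ℝ))))]
  simp only [Finset.mem_univ, if_pos]
  rw [Finset.mul_sum, Finset.mul_sum]
  exact Finset.sum_congr rfl (fun v _ => by ring)

lemma single_ind (m k : ℕ) (hm : 0 < m) (θ : Fin k → ℝ)
    (p : Fin k → Vt m → ℝ) (lam : ℝ) (g : Fin k) :
    ∑ ω : OmegaQA k m, wQA k m θ p lam ω *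
        (if ω.1 = g then ((ω.2.1 : ℤ) : ℝ) else 0)
      = θ g * ∑ v : Vt m, p g v * ((v : ℤ) : ℝ) := by
  classical
  have hN := cardQ_ne m k hm
  simp only [Fintype.sum_prod_type, wQA]
  set N : ℝ := (Fintype.card (Query k m) : ℝ) with hNdef
  have key : ∀ g' : Fin k, ∀ v : Vt m,
      (∑ q : Query k m, ∑ w : Vt m,
        θ g' * p g' v * (1 / N) * RR m lam v w *
          (if g' = g then ((v : ℤ) : ℝ) else 0))
      = if g' = g then θ g * p g v * ((v : ℤ) : ℝ) else 0 := by
    intro g' v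
    by_cases hg : g' = g
    · subst hg
      simp only [eq_self_iff_true, if_true]
      have hstep : ∀ q : Query k m,
          (∑ w : Vt m,
            θ g' * p g' v * (1 / N) * RR m lam v w * ((v : ℤ) : ℝ))
          = θ g' * p g' v * (1 / N) * ((v : ℤ) : ℝ) := by
        intro q
        rw [show (fun w => θ g' * p g' v * (1 / N) *
            RR m lam v w * ((v : ℤ) : ℝ))
          = fun w => (θ g' * p g' v * (1 / N) *
            ((v : ℤ) : ℝ)) * RR m lam v w from funext (fun w => by ring)]
        rw [← Finset.mul_sum, RR_sum m hm lam v, mul_one]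
      rw [Finset.sum_congr rfl (fun q _ => hstep q), Finset.sum_const,
        Finset.card_univ, nsmul_eq_mul, ← hNdef]
      have h1 : (1 / N) * N = 1 := one_div_mul_cancel hN
      calc N * (θ g' * p g' v * (1 / N) * ((v : ℤ) : ℝ))
          = θ g' * p g' v * ((v : ℤ) : ℝ) * ((1 / N) * N) := by ring
        _ = θ g' * p g' v * ((v : ℤ) : ℝ) := by rw [h1, mul_one]
    · simp [hg]
  rw [Finset.sum_congr rfl (fun g' _ => Finset.sum_congr rfl (fun v _ => key g' v))]
  rw [Finset.sum_comm]
  rw [Finset.sum_congr rfl (fun v (_ : v ∈ Finset.univ) =>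
    Finset.sum_ite_eq' Finset.univ g (fun _ => θ g * p g v * ((v : ℤ) : ℝ)))]
  simp only [Finset.mem_univ, if_pos]
  rw [Finset.mul_sum]
  exact Finset.sum_congr rfl (fun v _ => by ring)

lemma wQA_sum (m k : ℕ) (hm : 0 < m) (θ : Fin k → ℝ)
    (p : Fin k → Vt m → ℝ) (lam : ℝ)
    (hpsum : ∀ g, ∑ v : Vt m, p g v = 1) (hθ1 : ∑ g, θ g = 1) :
    ∑ ω : OmegaQA k m, wQA k m θ p lam ω = 1 := by
  classical
  have hN := cardQ_ne m k hm
  simp only [Fintype.sum_prod_type, wQA]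
  set N : ℝ := (Fintype.card (Query k m) : ℝ) with hNdef
  have key : ∀ g' : Fin k, ∀ v : Vt m,
      (∑ q : Query k m, ∑ w : Vt m,
        θ g' * p g' v * (1 / N) * RR m lam v w)
      = θ g' * p g' v := by
    intro g' v
    have hstep : ∀ q : Query k m,
        (∑ w : Vt m, θ g' * p g' v * (1 / N) * RR m lam v w)
        = θ g' * p g' v * (1 / N) := by
      intro q
      rw [← Finset.mul_sum, RR_sum m hm lam v, mul_one]
    rw [Finset.sum_congr rfl (fun q _ => hstep q), Finset.sum_const,
      Finset.card_univ, nsmul_eq_mul, ← hNdef]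
    have h1 : (1 / N) * N = 1 := one_div_mul_cancel hN
    calc N * (θ g' * p g' v * (1 / N))
        = θ g' * p g' v * ((1 / N) * N) := by ring
      _ = θ g' * p g' v := by rw [h1, mul_one]
  rw [Finset.sum_congr rfl (fun g' _ => Finset.sum_congr rfl (fun v _ => key g' v))]
  rw [Finset.sum_congr rfl (fun g' (_ : g' ∈ Finset.univ) => (Finset.mul_sum _ _ _).symm)]
  rw [Finset.sum_congr rfl (fun g' (_ : g' ∈ Finset.univ) => by rw [hpsum g', mul_one])]
  exact hθ1

lemma exp_coord {X : Type*} [Fintype X] (n : ℕ) (f h : X → ℝ)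
    (hf : ∑ x, f x = 1) (i : Fin n) :
    ∑ ω : Fin n → X, (∏ j, f (ω j)) * h (ω i) = ∑ x, f x * h x := by
  classical
  set F : Fin n → X → ℝ := fun j x => if j = i then f x * h x else f x with hF
  have step : ∀ ω : Fin n → X, (∏ j, f (ω j)) * h (ω i)
      = ∏ j, F j (ω j) := by
    intro ω
    rw [← Finset.prod_erase_mul Finset.univ _ (Finset.mem_univ i),
      ← Finset.prod_erase_mul Finset.univ (fun j => F j (ω j)) (Finset.mem_univ i)]
    simp only [hF, eq_self_iff_true, if_true]
    rw [Finset.prod_congr rfl (fun j hj => if_neg (Finset.ne_of_mem_erase hj))]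
    ring
  rw [Finset.sum_congr rfl (fun ω _ => step ω), ← Fintype.prod_sum F]
  rw [Finset.prod_congr rfl (fun j (_ : j ∈ Finset.univ) =>
    show (∑ x, F j x) = if j = i then ∑ x, f x * h x else 1 by
      by_cases hj : j = i <;> simp [hF, hj, hf])]
  rw [Finset.prod_ite_eq' Finset.univ i (fun _ => ∑ x, f x * h x)]
  simp

end Aux

/-- The Q&A estimator is unbiased: for every group `g`,
`E[Ŝ_QA(g)] = E[S(g)]`, where the expectation is over `n` i.i.d. users, each
distributed according to the single-user Q&A model. -/
theorem stmt7 (m k n : ℕ) (hm : 0 < m) (hk : 2 ≤ k) (hn : 0 < n)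
    (p : Fin k → Vt m → ℝ)
    (hpsum : ∀ g, ∑ v : Vt m, p g v = 1)
    (hp : ∀ g v, 0 < p g v ∧ p g v < 1)
    (θ : Fin k → ℝ) (hθ0 : ∀ g, 0 ≤ θ g) (hθ1 : ∑ g, θ g = 1)
    (lam : ℝ) (hlam0 : 0 ≤ lam) (hlam1 : lam < 1 - 1/(2*m))
    (g : Fin k) :
    (∑ ω : Fin n → OmegaQA k m,
        (∏ i, wQA k m θ p lam (ω i)) * estQA k m n lam ω g)
      = ∑ ω : Fin n → OmegaQA k m,
          (∏ i, wQA k m θ p lam (ω i)) * trueAgg k m n ω g := by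
  classical
  have hw1 : ∑ x : OmegaQA k m, wQA k m θ p lam x = 1 :=
    wQA_sum m k hm θ p lam hpsum hθ1
  have h2 : (2*(m:ℝ) - 1) ≠ 0 := twom_ne m hm
  have hm1 : (1:ℝ) ≤ (m:ℝ) := by exact_mod_cast hm
  have hmpos : (0:ℝ) < 2*(m:ℝ) := by linarith
  have h3 : 2*(m:ℝ)*lam < 2*(m:ℝ) - 1 := by
    have hmul := mul_lt_mul_of_pos_left hlam1 hmpos
    have heq : 2*(m:ℝ)*(1 - 1/(2*(m:ℝ))) = 2*(m:ℝ) - 1 := by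
      field_simp
    linarith
  have hden : (2*(m:ℝ) - 2*(m:ℝ)*lam - 1) ≠ 0 := ne_of_gt (by linarith)
  set T : ℝ := θ g * ∑ v : Vt m, p g v * ((v : ℤ) : ℝ) with hT
  have hLsingle := single_decode m k hm θ p lam g
  have hRsingle := single_ind m k hm θ p lam g
  have hL : (∑ ω : Fin n → OmegaQA k m,
        (∏ i, wQA k m θ p lam (ω i)) * estQA k m n lam ω g)
      = ((2*(m:ℝ)-1)/(2*(m:ℝ)-2*(m:ℝ)*lam-1))
          * ((n : ℝ) * (((2*(m:ℝ) - 2*(m:ℝ)*lam - 1)/(2*(m:ℝ) - 1)) * T)) := by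
    have hsplit : ∀ ω : Fin n → OmegaQA k m,
        (∏ i, wQA k m θ p lam (ω i)) * estQA k m n lam ω g
        = ((2*(m:ℝ)-1)/(2*(m:ℝ)-2*(m:ℝ)*lam-1)) *
            ∑ i, (∏ j, wQA k m θ p lam (ω j)) * ((decodeQA k m (ω i) g : ℤ) : ℝ) := by
      intro ω
      rw [estQA, mul_left_comm, Finset.mul_sum]
    rw [Finset.sum_congr rfl (fun ω _ => hsplit ω), ← Finset.mul_sum,
      Finset.sum_comm]
    rw [Finset.sum_congr rfl (fun i (_ : i ∈ Finset.univ) =>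
      exp_coord n (wQA k m θ p lam)
        (fun x => ((decodeQA k m x g : ℤ) : ℝ)) hw1 i)]
    rw [Finset.sum_const, Finset.card_univ, Fintype.card_fin, nsmul_eq_mul,
      hLsingle]
  have hR : (∑ ω : Fin n → OmegaQA k m,
        (∏ i, wQA k m θ p lam (ω i)) * trueAgg k m n ω g)
      = (n : ℝ) * T := by
    have hsplit : ∀ ω : Fin n → OmegaQA k m,
        (∏ i, wQA k m θ p lam (ω i)) * trueAgg k m n ω g
        = ∑ i, (∏ j, wQA k m θ p lam (ω j)) *
            (if (ω i).1 = g then (((ω i).2.1 : ℤ) : ℝ) else 0) := by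
      intro ω
      rw [trueAgg, Finset.mul_sum]
    rw [Finset.sum_congr rfl (fun ω _ => hsplit ω), Finset.sum_comm]
    rw [Finset.sum_congr rfl (fun i (_ : i ∈ Finset.univ) =>
      exp_coord n (wQA k m θ p lam)
        (fun x => if x.1 = g then ((x.2.1 : ℤ) : ℝ) else 0) hw1 i)]
    rw [Finset.sum_const, Finset.card_univ, Fintype.card_fin, nsmul_eq_mul,
      hRsingle]
  rw [hL, hR]
  have hCD : ((2*(m:ℝ)-1)/(2*(m:ℝ)-2*(m:ℝ)*lam-1)) *
      ((2*(m:ℝ) - 2*(m:ℝ)*lam - 1)/(2*(m:ℝ) - 1)) = 1 := by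
    rw [div_mul_div_comm, div_eq_one_iff_eq (mul_ne_zero hden h2)]
    ring
  calc ((2*(m:ℝ)-1)/(2*(m:ℝ)-2*(m:ℝ)*lam-1))
        * ((n : ℝ) * (((2*(m:ℝ) - 2*(m:ℝ)*lam - 1)/(2*(m:ℝ) - 1)) * T))
      = (((2*(m:ℝ)-1)/(2*(m:ℝ)-2*(m:ℝ)*lam-1)) *
          ((2*(m:ℝ) - 2*(m:ℝ)*lam - 1)/(2*(m:ℝ) - 1))) * ((n : ℝ) * T) := by
        ring
    _ = (n : ℝ) * T := by rw [hCD, one_mul]
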